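/- The number N_{k,s} of (k-1)-simplices in the moduli space of holocolored one-loop graphs with s legs is N_{k,s} = ((k-1)!/(2-δ_{k,1}))·binomial(s,k)·Σ_{j=0}^{k} (-1)^{k-j} binomial(k,j) j^s, for 1 ≤ k ≤ s. -/

import Mathlib

open Finset

/-- A `(k-1)`-simplex datum of the moduli space of holocolored one-loop graphs
with `s` legs: a distribution of the `s` labeled legs onto the `k` cyclically
arranged vertices (a surjection `Fin s → ZMod k`), together with an injective
coloring of the `k` edges by the `s` available colors (edge `j` joins vertices
`j` and `j+1`). -/
def SimplexDatum (s k : ℕ) : Type :=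
  {v : Fin s → ZMod k // Function.Surjective v} ×
    {c : ZMod k → Fin s // Function.Injective c}

/-- Two simplex data describe the same simplex iff they differ by a rotation or
a reflection of the cycle: a rotation by `r` sends vertex `x` to `x + r` and
edge `j` to `j + r`; a reflection sends vertex `x` to `r - x` and edge `j` to
`r - j - 1`. -/
def SimplexRel (s k : ℕ) : SimplexDatum s k → SimplexDatum s k → Prop :=
  fun x y => ∃ r : ZMod k,
    ((∀ i, (y.1 : Fin s → ZMod k) i = (x.1 : Fin s → ZMod k) i + r) ∧
        (∀ j, (y.2 : ZMod k → Fin s) j = (x.2 : ZMod k → Fin s) (j - r))) ∨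
    ((∀ i, (y.1 : Fin s → ZMod k) i = r - (x.1 : Fin s → ZMod k) i) ∧
        (∀ j, (y.2 : ZMod k → Fin s) j = (x.2 : ZMod k → Fin s) (r - j - 1)))

namespace SimplexCount

open Function MulAction

variable {s k : ℕ}

lemma datum_ext {x y : SimplexDatum s k} (h1 : ∀ a, x.1.1 a = y.1.1 a)
    (h2 : ∀ j, x.2.1 j = y.2.1 j) : x = y :=
  Prod.ext (Subtype.ext (funext h1)) (Subtype.ext (funext h2))

/-- The dihedral action on simplex data. -/
def act (g : DihedralGroup k) (x : SimplexDatum s k) : SimplexDatum s k :=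
  match g with
  | .r i =>
      (⟨fun a => x.1.1 a - i, fun y => by
          obtain ⟨a, ha⟩ := x.1.2 (y + i)
          exact ⟨a, by show x.1.1 a - i = y; rw [ha]; ring⟩⟩,
       ⟨fun j => x.2.1 (j + i), fun j j' h => by
          have h2 := x.2.2 h; exact add_right_cancel h2⟩)
  | .sr i =>
      (⟨fun a => i - x.1.1 a, fun y => by
          obtain ⟨a, ha⟩ := x.1.2 (i - y)
          exact ⟨a, by show i - x.1.1 a = y; rw [ha]; ring⟩⟩,
       ⟨fun j => x.2.1 (i - j - 1), fun j j' h => by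
          have h2 := x.2.2 h
          have h3 : i - j = i - j' := sub_left_injective h2
          exact sub_right_injective h3⟩)

instance : MulAction (DihedralGroup k) (SimplexDatum s k) where
  smul := act
  one_smul x := by
    show act 1 x = x
    rw [DihedralGroup.one_def]
    refine datum_ext (fun a => ?_) (fun j => ?_)
    · show x.1.1 a - 0 = x.1.1 a; ring
    · show x.2.1 (j + 0) = x.2.1 j; rw [add_zero]
  mul_smul g h x := by
    show act (g * h) x = act g (act h x)
    rcases g with i | i <;> rcases h with j | j <;>
      refine datum_ext (fun a => ?_) (fun m => ?_) <;>
      simp only [act, DihedralGroup.r_mul_r, DihedralGroup.r_mul_sr,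
        DihedralGroup.sr_mul_r, DihedralGroup.sr_mul_sr] <;>
      first
        | ring
        | exact congrArg x.2.1 (by ring)

lemma smul_r_def (i : ZMod k) (x : SimplexDatum s k) :
    (DihedralGroup.r i) • x =
      (⟨fun a => x.1.1 a - i, ((DihedralGroup.r i) • x).1.2⟩,
       ⟨fun j => x.2.1 (j + i), ((DihedralGroup.r i) • x).2.2⟩) := rfl

lemma smul_sr_def (i : ZMod k) (x : SimplexDatum s k) :
    (DihedralGroup.sr i) • x =
      (⟨fun a => i - x.1.1 a, ((DihedralGroup.sr i) • x).1.2⟩,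
       ⟨fun j => x.2.1 (i - j - 1), ((DihedralGroup.sr i) • x).2.2⟩) := rfl

lemma rel_iff (x y : SimplexDatum s k) :
    SimplexRel s k x y ↔ ∃ g : DihedralGroup k, g • x = y := by
  constructor
  · rintro ⟨ρ, ⟨h1, h2⟩ | ⟨h1, h2⟩⟩
    · refine ⟨DihedralGroup.r (-ρ), datum_ext (fun a => ?_) (fun j => ?_)⟩
      · show x.1.1 a - (-ρ) = y.1.1 a
        rw [h1 a]; ring
      · show x.2.1 (j + (-ρ)) = y.2.1 j
        rw [h2 j]; congr 1; ring
    · refine ⟨DihedralGroup.sr ρ, datum_ext (fun a => ?_) (fun j => ?_)⟩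
      · exact (h1 a).symm
      · exact (h2 j).symm
  · rintro ⟨g, rfl⟩
    rcases g with i | i
    · refine ⟨-i, Or.inl ⟨fun a => ?_, fun j => ?_⟩⟩
      · show x.1.1 a - i = x.1.1 a + (-i); ring
      · show x.2.1 (j + i) = x.2.1 (j - (-i)); congr 1; ring
    · exact ⟨i, Or.inr ⟨fun a => rfl, fun j => rfl⟩⟩

lemma rel_iff' (x y : SimplexDatum s k) :
    SimplexRel s k x y ↔ ∃ g : DihedralGroup k, g • y = x := by
  rw [rel_iff]
  constructor
  · rintro ⟨g, rfl⟩; exact ⟨g⁻¹, inv_smul_smul g x⟩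
  · rintro ⟨g, rfl⟩; exact ⟨g⁻¹, inv_smul_smul g y⟩

/-- For `k = 1` every group element acts trivially. -/
lemma all_fix (g : DihedralGroup 1) (x : SimplexDatum s 1) : g • x = x := by
  rcases g with i | i
  · exact datum_ext (fun a => Subsingleton.elim _ _)
      (fun j => congrArg x.2.1 (Subsingleton.elim _ _))
  · exact datum_ext (fun a => Subsingleton.elim _ _)
      (fun j => congrArg x.2.1 (Subsingleton.elim _ _))

/-- For `k ≥ 2` the action is free. -/
lemma stab_triv (hk2 : 2 ≤ k) (hs : 0 < s) (g : DihedralGroup k)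
    (x : SimplexDatum s k) (h : g • x = x) : g = 1 := by
  have h1 : ∀ a, (g • x).1.1 a = x.1.1 a := fun a =>
    congrFun (congrArg (fun z : SimplexDatum s k => z.1.1) h) a
  have h2 : ∀ j, (g • x).2.1 j = x.2.1 j := fun j =>
    congrFun (congrArg (fun z : SimplexDatum s k => z.2.1) h) j
  rcases g with i | i
  · have e0 : x.2.1 (0 + i) = x.2.1 0 := h2 0
    have : (0 : ZMod k) + i = 0 := x.2.2 e0
    rw [DihedralGroup.one_def]
    congr 1
    linear_combination this
  · exfalso
    have e0 : x.2.1 (i - 0 - 1) = x.2.1 0 := h2 0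
    have e1 : x.2.1 (i - 1 - 1) = x.2.1 1 := h2 1
    have f0 : i - 0 - 1 = (0 : ZMod k) := x.2.2 e0
    have f1 : i - 1 - 1 = (1 : ZMod k) := x.2.2 e1
    have h20 : ((2 : ℕ) : ZMod k) = 0 := by push_cast; linear_combination f0 - f1
    have hdvd : k ∣ 2 := (ZMod.natCast_eq_zero_iff 2 k).mp h20
    have hk22 : k = 2 := le_antisymm (Nat.le_of_dvd (by norm_num) hdvd) hk2
    subst hk22
    have hi : i = 1 := by linear_combination f0
    have hv : i - x.1.1 ⟨0, hs⟩ = x.1.1 ⟨0, hs⟩ := h1 ⟨0, hs⟩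
    rw [hi] at hv
    revert hv
    generalize x.1.1 ⟨0, hs⟩ = w
    revert w
    decide

lemma card_inj [NeZero k] :
    Nat.card {c : ZMod k → Fin s // Function.Injective c} = s.descFactorial k := by
  rw [Nat.card_congr ((Equiv.subtypeInjectiveEquivEmbedding (ZMod k) (Fin s)) :
      {c : ZMod k → Fin s // Function.Injective c} ≃ (ZMod k ↪ Fin s)),
    Nat.card_eq_fintype_card, Fintype.card_embedding_eq, Fintype.card_fin, ZMod.card]

lemma card_surj [NeZero k] :
    (Nat.card {v : Fin s → ZMod k // Function.Surjective v} : ℤ) =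
      ∑ j ∈ range (k + 1), (-1 : ℤ) ^ (k - j) * (k.choose j) * (j : ℤ) ^ s := by
  classical
  set S : ZMod k → Finset (Fin s → ZMod k) :=
    fun i => Fintype.piFinset fun _ => {i}ᶜ with hS
  have h1 : (univ : Finset (ZMod k)).inf (fun i => (S i)ᶜ)
      = univ.filter (fun v => Function.Surjective v) := by
    ext v
    simp only [Finset.mem_inf, Finset.mem_compl, Fintype.mem_piFinset, hS,
      Finset.mem_singleton, mem_filter, mem_univ, true_and, Function.Surjective]
    push_neg
    have hm : v ∈ univ.filter (fun v : Fin s → ZMod k => ∀ b, ∃ a, v a = b) ↔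
        ∀ b, ∃ a, v a = b := by simp only [Finset.mem_filter, mem_univ, true_and]
    constructor
    · intro h; convert hm.mpr (fun b => h b trivial); congr 1
    · intro h i _; exact hm.mp (by convert h; congr 1) i
  have h2 : ∀ t : Finset (ZMod k), t.inf S = Fintype.piFinset fun _ : Fin s => tᶜ := by
    intro t
    ext v
    simp only [Finset.mem_inf, Fintype.mem_piFinset, hS, Finset.mem_compl,
      Finset.mem_singleton]
    exact ⟨fun h a hat => h _ hat a rfl, fun h i hit a hv => h a (hv ▸ hit)⟩
  have h3 : ∀ t : Finset (ZMod k), (#(t.inf S) : ℤ) = ((k - #t : ℕ) : ℤ) ^ s := by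
    intro t
    rw [h2 t, Fintype.card_piFinset]
    simp [Finset.card_compl, ZMod.card]
  have hIE := Finset.inclusion_exclusion_card_inf_compl (univ : Finset (ZMod k)) S
  rw [h1] at hIE
  have hcard : Nat.card {v : Fin s → ZMod k // Function.Surjective v}
      = #(univ.filter (fun v : Fin s → ZMod k => Function.Surjective v)) := by
    rw [Nat.card_eq_fintype_card]
    exact Fintype.card_subtype _
  rw [hcard, hIE]
  have h4 : ∑ t ∈ (univ : Finset (ZMod k)).powerset, (-1 : ℤ) ^ #t * #(t.inf S)
      = ∑ t ∈ (univ : Finset (ZMod k)).powerset,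
          (fun m : ℕ => (-1 : ℤ) ^ m * ((k - m : ℕ) : ℤ) ^ s) #t := by
    refine Finset.sum_congr rfl fun t _ => ?_
    simp only []
    rw [h3 t]
  rw [h4, Finset.sum_powerset_apply_card (fun m : ℕ => (-1 : ℤ) ^ m * ((k - m : ℕ) : ℤ) ^ s)]
  have hcu : #(univ : Finset (ZMod k)) = k := by
    rw [Finset.card_univ, ZMod.card]
  rw [hcu]
  rw [← Finset.sum_range_reflect
    (fun m => (k.choose m) • ((-1 : ℤ) ^ m * ((k - m : ℕ) : ℤ) ^ s)) (k + 1)]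
  refine Finset.sum_congr rfl fun j hj => ?_
  have hjk : j ≤ k := by
    have := Finset.mem_range.mp hj; omega
  have hred : k + 1 - 1 - j = k - j := by omega
  rw [hred, Nat.choose_symm hjk, Nat.sub_sub_self hjk]
  push_cast
  ring

end SimplexCount

open SimplexCount MulAction in
/-- For `1 ≤ k ≤ s`, the number `N_{k,s}` of `(k-1)`-simplices in the moduli
space of holocolored one-loop graphs with `s` legs is
`N_{k,s} = ((k-1)!/(2-δ_{k,1}))·C(s,k)·∑_{j=0}^k (-1)^(k-j) C(k,j) j^s`. -/
theorem card_simplices (s k : ℕ) (hk : 1 ≤ k) (hks : k ≤ s) :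
    (Nat.card (Quot (SimplexRel s k)) : ℚ) =
      ((k - 1).factorial : ℚ) / (2 - if k = 1 then 1 else 0) * (s.choose k) *
        ∑ j ∈ range (k + 1), (-1 : ℚ) ^ (k - j) * (k.choose j) * (j : ℚ) ^ s := by
  classical
  haveI : NeZero k := ⟨by omega⟩
  haveI : Finite (SimplexDatum s k) := by
    unfold SimplexDatum; infer_instance
  letI : Fintype (SimplexDatum s k) := Fintype.ofFinite _
  letI : Fintype (Quotient (orbitRel (DihedralGroup k) (SimplexDatum s k))) :=
    Fintype.ofFinite _
  letI : ∀ b : SimplexDatum s k, Fintype (stabilizer (DihedralGroup k) b) :=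
    fun b => Fintype.ofFinite _
  -- identify the quotient with the orbit quotient
  have e : Quot (SimplexRel s k)
      ≃ Quotient (orbitRel (DihedralGroup k) (SimplexDatum s k)) :=
    Quot.congrRight fun a b =>
      (rel_iff' a b).trans (MulAction.mem_orbit_iff).symm
  have hQ : (Nat.card (Quot (SimplexRel s k)) : ℚ)
      = (Fintype.card (Quotient (orbitRel (DihedralGroup k) (SimplexDatum s k))) : ℚ) := by
    rw [Nat.card_congr e, Nat.card_eq_fintype_card]
  -- the total count
  have hprod : Nat.card (SimplexDatum s k)
      = Nat.card {v : Fin s → ZMod k // Function.Surjective v}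
        * Nat.card {c : ZMod k → Fin s // Function.Injective c} :=
    Nat.card_prod _ _
  have hsurjQ : ((Nat.card {v : Fin s → ZMod k // Function.Surjective v} : ℚ))
      = ∑ j ∈ range (k + 1), (-1 : ℚ) ^ (k - j) * (k.choose j) * (j : ℚ) ^ s := by
    have := @card_surj s k _
    exact_mod_cast congrArg (fun z : ℤ => (z : ℚ)) this
  have htotal : ((Fintype.card (SimplexDatum s k) : ℚ))
      = (s.descFactorial k : ℚ)
        * ∑ j ∈ range (k + 1), (-1 : ℚ) ^ (k - j) * (k.choose j) * (j : ℚ) ^ s := by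
    rw [← Nat.card_eq_fintype_card, hprod, ← hsurjQ, card_inj]
    push_cast
    ring
  have hclass := MulAction.card_eq_sum_card_group_div_card_stabilizer
    (DihedralGroup k) (SimplexDatum s k)
  rcases eq_or_lt_of_le hk with hk1 | hk2
  · -- k = 1
    have hk1 : k = 1 := hk1.symm
    subst hk1
    have hstab : ∀ b : SimplexDatum s 1,
        Fintype.card (stabilizer (DihedralGroup 1) b)
          = Fintype.card (DihedralGroup 1) := fun b =>
      Fintype.card_congr (Equiv.subtypeUnivEquiv fun g =>
        MulAction.mem_stabilizer_iff.mpr (all_fix g b))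
    have hGpos : 0 < Fintype.card (DihedralGroup 1) := Fintype.card_pos
    have hsum : Fintype.card (SimplexDatum s 1)
        = Fintype.card (Quotient (orbitRel (DihedralGroup 1) (SimplexDatum s 1))) := by
      rw [hclass]
      rw [Finset.sum_congr rfl fun ω _ => by
        rw [hstab, Nat.div_self hGpos]]
      simp
    rw [hQ, ← hsum, htotal]
    norm_num [Nat.descFactorial]
  · -- k ≥ 2
    have hk2' : 2 ≤ k := hk2
    have hstab : ∀ b : SimplexDatum s k,
        Fintype.card (stabilizer (DihedralGroup k) b) = 1 := by
      intro b
      rw [Fintype.card_eq_one_iff]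
      refine ⟨⟨1, one_mem _⟩, ?_⟩
      rintro ⟨g, hg⟩
      exact Subtype.ext (stab_triv hk2' (by omega) g b
        (MulAction.mem_stabilizer_iff.mp hg))
    have hsum : Fintype.card (SimplexDatum s k)
        = Fintype.card (Quotient (orbitRel (DihedralGroup k) (SimplexDatum s k)))
          * (2 * k) := by
      rw [hclass]
      rw [Finset.sum_congr rfl fun ω _ => by
        rw [hstab, Nat.div_one, DihedralGroup.card]]
      rw [Finset.sum_const, Finset.card_univ, smul_eq_mul]
    have hkne : ¬ k = 1 := by omega
    have hne : ((2 : ℚ) * k) ≠ 0 := by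
      have : (0:ℚ) < k := by exact_mod_cast Nat.pos_of_ne_zero (by omega)
      positivity
    have key : (Fintype.card (Quotient (orbitRel (DihedralGroup k) (SimplexDatum s k))) : ℚ)
          * (2 * k)
        = (s.descFactorial k : ℚ)
          * ∑ j ∈ range (k + 1), (-1 : ℚ) ^ (k - j) * (k.choose j) * (j : ℚ) ^ s := by
      rw [← htotal, hsum]; push_cast; ring
    have hdf : (s.descFactorial k : ℚ) = (k.factorial : ℚ) * (s.choose k) := by
      exact_mod_cast Nat.descFactorial_eq_factorial_mul_choose s k
    have hf : (k : ℚ) * ((k - 1).factorial : ℚ) = (k.factorial : ℚ) := by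
      exact_mod_cast Nat.mul_factorial_pred (by omega : k ≠ 0)
    rw [hQ, if_neg hkne]
    apply mul_right_cancel₀ hne
    rw [key, hdf]
    linear_combination (-(s.choose k : ℚ)
      * ∑ j ∈ range (k + 1), (-1 : ℚ) ^ (k - j) * (k.choose j) * (j : ℚ) ^ s) * hf
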